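/- For the ideal low-pass filter with cutoff frequency f_c, the dual problem sup{ ⟨y,p⟩ : ‖Φ*p‖_∞ ≤ 1 } always admits a solution; hence the minimal-norm certificate p₀ is well defined for any input measure m₀. -/

import Mathlib

open MeasureTheory

theorem Real.fact_zero_lt_one : Fact ((0 : ℝ) < 1) :=
  ⟨zero_lt_one⟩

attribute [local instance] Real.fact_zero_lt_one

noncomputable section

/-- The torus `T = ℝ/ℤ`. -/
abbrev 𝕋 := AddCircle (1 : ℝ)

/-- Integral `∫ f dm` of a function against a (finite) signed Radon measure on the torus. -/
def sInt (m : SignedMeasure 𝕋) (f : 𝕋 → ℝ) : ℝ :=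
  ∫ x, f x ∂m.toJordanDecomposition.posPart - ∫ x, f x ∂m.toJordanDecomposition.negPart

/-- The total variation norm `‖m‖_TV = sup { ∫ ψ dm : ψ ∈ C(𝕋), ‖ψ‖_∞ ≤ 1 }`. -/
def tv (m : SignedMeasure 𝕋) : ℝ :=
  sSup { r | ∃ ψ : C(𝕋, ℝ), ‖ψ‖ ≤ 1 ∧ r = sInt m ψ }

/-- The lift of a function on the torus to a `1`-periodic function on `ℝ`. -/
def lift (f : 𝕋 → ℝ) : ℝ → ℝ := fun s => f (s : 𝕋)

/-- The convolution operator `Φ : M(𝕋) → L²(𝕋)`, `(Φm)(t) = ∫ φ(x − t) dm(x)`. -/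
def Phi (φ : 𝕋 → ℝ) (m : SignedMeasure 𝕋) : 𝕋 → ℝ := fun t => sInt m (fun x => φ (x - t))

/-- The adjoint operator `Φ* : L²(𝕋) → C(𝕋)`, `(Φ*p)(t) = ∫ φ(t − x) p(x) dx`. -/
def PhiStar (φ : 𝕋 → ℝ) (p : 𝕋 → ℝ) : 𝕋 → ℝ := fun t => ∫ x, φ (t - x) * p x

/-- The `L²(𝕋)` norm of a function. -/
def L2norm (p : 𝕋 → ℝ) : ℝ := Real.sqrt (∫ t, (p t) ^ 2)

/-- The `L²(𝕋)` inner product. -/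
def dotL2 (y p : 𝕋 → ℝ) : ℝ := ∫ t, y t * p t

/-- `p` is admissible for the dual problems: `p ∈ L²` and `‖Φ*p‖_∞ ≤ 1`. -/
def DualAdm (φ : 𝕋 → ℝ) (p : 𝕋 → ℝ) : Prop :=
  MemLp p 2 volume ∧ ∀ t : 𝕋, |PhiStar φ p t| ≤ 1


/-- `φ` is the Dirichlet kernel with cutoff frequency `f_c`:
`φ(t) = ∑_{k=−f_c}^{f_c} e^{2iπkt} = 1 + 2 ∑_{k=1}^{f_c} cos(2πkt)`. -/
def IsDirichlet (fc : ℕ) (φ : 𝕋 → ℝ) : Prop :=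
  ∀ s : ℝ, lift φ s = 1 + 2 * ∑ k ∈ Finset.Icc 1 fc, Real.cos (2 * Real.pi * k * s)


section AuxCert
open Complex

lemma vol_eq_haar : (volume : Measure 𝕋) = AddCircle.haarAddCircle := by
  rw [AddCircle.volume_eq_smul_haarAddCircle]; simp

instance : IsProbabilityMeasure (volume : Measure 𝕋) := by
  rw [vol_eq_haar]; infer_instance

lemma cont_integrable {f : 𝕋 → ℂ} (hf : Continuous f) : Integrable f (volume : Measure 𝕋) := by
  have : HasCompactSupport f := HasCompactSupport.of_compactSpace f
  exact hf.integrable_of_hasCompactSupport this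

lemma int_fourier (n : ℤ) :
    (∫ t : 𝕋, fourier n t) = if n = 0 then 1 else 0 := by
  split_ifs with h
  · subst h
    simp only [fourier_zero]
    simp
  · rw [vol_eq_haar]
    exact integral_eq_zero_of_add_right_eq_neg
      (fourier_add_half_inv_index h one_pos)

lemma sum_Icc_neg {M : Type*} [AddCommMonoid M] (N : ℕ) (g : ℤ → M) :
    ∑ n ∈ Finset.Icc (-(N:ℤ)) N, g n
      = g 0 + ∑ k ∈ Finset.Icc 1 N, (g k + g (-(k:ℤ))) := by
  induction N with
  | zero => simp
  | succ N ih =>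
      have h1 : (-(↑(N+1):ℤ)) = -(N:ℤ)-1 := by push_cast; ring
      have h2 : ((↑(N+1):ℤ)) = (N:ℤ)+1 := by push_cast; ring
      have hI : Finset.Icc (-(↑(N+1):ℤ)) (↑(N+1):ℤ)
          = insert (-(N:ℤ)-1) (insert ((N:ℤ)+1) (Finset.Icc (-(N:ℤ)) N)) := by
        ext n; simp; omega
      rw [hI, Finset.sum_insert (by
          simp only [Finset.mem_insert, Finset.mem_Icc]; omega),
        Finset.sum_insert (by simp only [Finset.mem_Icc]; omega), ih]
      have h3 : Finset.Icc 1 (N+1) = insert (N+1) (Finset.Icc 1 N) := by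
        ext n; simp; omega
      rw [h3, Finset.sum_insert (by simp), h2,
        show -((N:ℤ)+1) = -(N:ℤ)-1 from by ring]
      abel

lemma fourier_sub (n : ℤ) (t x : 𝕋) :
    fourier n (t - x) = fourier n t * fourier (-n) x := by
  have : n • (t - x) = n • t + (-n) • x := by
    rw [smul_sub, neg_smul]; abel
  rw [fourier_apply, fourier_apply, fourier_apply, this, AddCircle.toCircle_add]
  simp

lemma fourier_pair (k : ℕ) (s : ℝ) :
    fourier (k:ℤ) (s : 𝕋) + fourier (-(k:ℤ)) (s : 𝕋)
      = ((2 * Real.cos (2 * Real.pi * k * s) : ℝ) : ℂ) := by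
  have h1 : (fourier (k:ℤ) (s : 𝕋) : ℂ) = Complex.exp ((2 * Real.pi * k * s : ℝ) * I) := by
    rw [fourier_coe_apply]; congr 1; push_cast; ring
  have h2 : (fourier (-(k:ℤ)) (s : 𝕋) : ℂ) = Complex.exp (-((2 * Real.pi * k * s : ℝ) * I)) := by
    rw [fourier_coe_apply]; congr 1; push_cast; ring
  rw [h1, h2, Complex.exp_mul_I]
  rw [show -((2 * Real.pi * k * s : ℝ) * I) = ((-(2 * Real.pi * k * s) : ℝ) : ℂ) * I by
    push_cast; ring, Complex.exp_mul_I]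
  push_cast [Complex.ofReal_cos, Complex.ofReal_sin]
  rw [Complex.cos_neg, Complex.sin_neg]
  ring

lemma sum_fourier_real (fc : ℕ) (s : ℝ) :
    ∑ n ∈ Finset.Icc (-(fc:ℤ)) fc, fourier n (s : 𝕋)
      = ((1 + 2 * ∑ k ∈ Finset.Icc 1 fc, Real.cos (2 * Real.pi * k * s) : ℝ) : ℂ) := by
  rw [sum_Icc_neg fc (fun n => fourier n (s : 𝕋))]
  have h0 : (fourier (0:ℤ) ((s : ℝ) : 𝕋) : ℂ) = 1 := fourier_zero
  rw [h0]
  push_cast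
  rw [Finset.mul_sum]
  congr 1
  refine Finset.sum_congr rfl fun k hk => ?_
  have := fourier_pair k s
  push_cast at this
  rw [this]

def Iset (fc : ℕ) : Finset ℤ := Finset.Icc (-(fc:ℤ)) fc
def Sc (fc : ℕ) (c : ℤ → ℂ) : 𝕋 → ℂ := fun t => ∑ n ∈ Iset fc, c n * fourier n t
def etaF (fc : ℕ) (c : ℤ → ℂ) : 𝕋 → ℝ := fun t => (Sc fc c t).re
def coeffs (q : 𝕋 → ℝ) (n : ℤ) : ℂ := ∫ x : 𝕋, fourier (-n) x * (q x : ℂ)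

lemma ofReal_int (f : 𝕋 → ℝ) (μ : Measure 𝕋) :
    ((∫ x, f x ∂μ : ℝ) : ℂ) = ∫ x, ((f x : ℝ) : ℂ) ∂μ :=
  (integral_ofReal).symm

lemma cont_integrableC {f : 𝕋 → ℂ} (hf : Continuous f) (μ : Measure 𝕋) [IsFiniteMeasure μ] :
    Integrable f μ :=
  hf.integrable_of_hasCompactSupport (HasCompactSupport.of_compactSpace f)

lemma cont_integrableR {f : 𝕋 → ℝ} (hf : Continuous f) (μ : Measure 𝕋) [IsFiniteMeasure μ] :
    Integrable f μ :=
  hf.integrable_of_hasCompactSupport (HasCompactSupport.of_compactSpace f)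

lemma Sc_cont (fc : ℕ) (c : ℤ → ℂ) : Continuous (Sc fc c) :=
  continuous_finset_sum _ fun n _ => continuous_const.mul (fourier n).continuous

lemma etaF_cont (fc : ℕ) (c : ℤ → ℂ) : Continuous (etaF fc c) :=
  Complex.continuous_re.comp (Sc_cont fc c)

section Kernel
variable {fc : ℕ} {φ : 𝕋 → ℝ}

lemma kernel_expand (hφ : IsDirichlet fc φ) (u : 𝕋) :
    ((φ u : ℝ) : ℂ) = ∑ n ∈ Iset fc, fourier n u := by
  induction u using QuotientAddGroup.induction_on with
  | H s => rw [show φ ((s : ℝ) : 𝕋) = lift φ s from rfl, hφ s, Iset, sum_fourier_real]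

lemma kernel_expand₂ (hφ : IsDirichlet fc φ) (t x : 𝕋) :
    ((φ (t - x) : ℝ) : ℂ) = ∑ n ∈ Iset fc, fourier n t * fourier (-n) x := by
  rw [kernel_expand hφ (t - x)]
  exact Finset.sum_congr rfl fun n _ => fourier_sub n t x

lemma phi_cont (hφ : IsDirichlet fc φ) : Continuous φ := by
  have : φ = fun u => (∑ n ∈ Iset fc, fourier n u).re := by
    funext u; rw [← kernel_expand hφ u, Complex.ofReal_re]
  rw [this]
  exact Complex.continuous_re.comp (continuous_finset_sum _ fun n _ => (fourier n).continuous)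

lemma phi_bound (hφ : IsDirichlet fc φ) (u : 𝕋) : |φ u| ≤ ((Iset fc).card : ℝ) := by
  have h := kernel_expand hφ u
  have : |φ u| = ‖((φ u : ℝ) : ℂ)‖ := by rw [Complex.norm_real, Real.norm_eq_abs]
  rw [this, h]
  calc ‖∑ n ∈ Iset fc, fourier n u‖
      ≤ ∑ n ∈ Iset fc, ‖fourier n u‖ := by
        simpa using norm_sum_le (Iset fc) (fun n => (fourier n u : ℂ))
    _ ≤ ∑ _n ∈ Iset fc, 1 := Finset.sum_le_sum fun n _ => by
        simp [Complex.norm_def]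
    _ = ((Iset fc).card : ℝ) := by simp

lemma coeffs_neg (q : 𝕋 → ℝ) (n : ℤ) : coeffs q (-n) = starRingEnd ℂ (coeffs q n) := by
  rw [coeffs, coeffs, ← integral_conj]
  congr 1; funext x
  rw [map_mul, ← fourier_neg, neg_neg, Complex.conj_ofReal]

lemma integrable_fourier_mul {q : 𝕋 → ℝ} (hq : Integrable q volume) (n : ℤ) :
    Integrable (fun x : 𝕋 => fourier n x * (q x : ℂ)) volume := by
  refine Integrable.bdd_mul (c := 1) hq.ofReal ((fourier n).continuous.aestronglyMeasurable) (Filter.Eventually.of_forall fun x => ?_)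
  simp [Complex.norm_def]

lemma phiStar_expandC (hφ : IsDirichlet fc φ) {q : 𝕋 → ℝ} (hq : Integrable q volume) (t : 𝕋) :
    ((PhiStar φ q t : ℝ) : ℂ) = Sc fc (coeffs q) t := by
  rw [PhiStar, ofReal_int]
  have h1 : ∀ x : 𝕋, ((φ (t - x) * q x : ℝ) : ℂ)
      = ∑ n ∈ Iset fc, fourier n t * (fourier (-n) x * (q x : ℂ)) := by
    intro x
    rw [Complex.ofReal_mul, kernel_expand₂ hφ t x, Finset.sum_mul]
    exact Finset.sum_congr rfl fun n _ => by ring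
  rw [integral_congr_ae (Filter.Eventually.of_forall h1),
    integral_finset_sum _ (fun n _ => ((integrable_fourier_mul hq (-n)).const_mul _))]
  rw [Sc]
  refine Finset.sum_congr rfl fun n _ => ?_
  rw [integral_const_mul, coeffs, mul_comm]

lemma phiStar_eq_etaF (hφ : IsDirichlet fc φ) {q : 𝕋 → ℝ} (hq : Integrable q volume) :
    PhiStar φ q = etaF fc (coeffs q) := by
  funext t
  rw [etaF, ← phiStar_expandC hφ hq t, Complex.ofReal_re]

lemma coeffs_trig (fc : ℕ) (c : ℤ → ℂ) {m : ℤ} (hm : m ∈ Iset fc) :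
    ∫ x : 𝕋, fourier (-m) x * Sc fc c x = c m := by
  have h1 : ∀ x : 𝕋, fourier (-m) x * Sc fc c x
      = ∑ n ∈ Iset fc, c n * fourier (-m + n) x := by
    intro x
    rw [Sc, Finset.mul_sum]
    exact Finset.sum_congr rfl fun n _ => by rw [fourier_add]; ring
  rw [integral_congr_ae (Filter.Eventually.of_forall h1),
    integral_finset_sum _ (fun n _ =>
      (cont_integrableC (fourier (-m + n)).continuous volume).const_mul _)]
  have h2 : ∀ n ∈ Iset fc,
      (∫ x : 𝕋, c n * fourier (-m + n) x) = if n = m then c m else 0 := by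
    intro n _
    rw [integral_const_mul, int_fourier]
    split_ifs with h h2 h3
    · subst h2; simp
    · exfalso; omega
    · exfalso; omega
    · simp
  rw [Finset.sum_congr rfl h2, Finset.sum_ite_eq' (Iset fc) m (fun _ => c m), if_pos hm]

lemma parseval_fin (fc : ℕ) (c : ℤ → ℂ) :
    ∫ x : 𝕋, Complex.normSq (Sc fc c x) = ∑ n ∈ Iset fc, Complex.normSq (c n) := by
  have key : (∫ x : 𝕋, (Sc fc c x * starRingEnd ℂ (Sc fc c x)))
      = ∑ n ∈ Iset fc, (c n * starRingEnd ℂ (c n)) := by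
    have h1 : ∀ x : 𝕋, Sc fc c x * starRingEnd ℂ (Sc fc c x)
        = ∑ n ∈ Iset fc, (starRingEnd ℂ (c n)) * (fourier (-n) x * Sc fc c x) := by
      intro x
      rw [show starRingEnd ℂ (Sc fc c x)
          = ∑ n ∈ Iset fc, starRingEnd ℂ (c n) * fourier (-n) x by
        rw [Sc, map_sum]; exact Finset.sum_congr rfl fun n _ => by
          rw [map_mul, ← fourier_neg]]
      rw [Finset.mul_sum]
      exact Finset.sum_congr rfl fun n _ => by ring
    rw [integral_congr_ae (Filter.Eventually.of_forall h1),
      integral_finset_sum _ (fun n _ => Integrable.const_mul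
        (f := fun x => fourier (-n) x * Sc fc c x) (((fourier (-n)).continuous.mul
        (Sc_cont fc c)).integrable_of_hasCompactSupport
        (HasCompactSupport.of_compactSpace _)) _)]
    exact Finset.sum_congr rfl fun n hn => by
      rw [integral_const_mul, coeffs_trig fc c hn, mul_comm]
  have h2 : ∀ x : 𝕋, ((Complex.normSq (Sc fc c x) : ℝ) : ℂ)
      = Sc fc c x * starRingEnd ℂ (Sc fc c x) := fun x => (Complex.mul_conj _).symm
  have h3 : ((∫ x : 𝕋, Complex.normSq (Sc fc c x) : ℝ) : ℂ)
      = ∑ n ∈ Iset fc, (c n * starRingEnd ℂ (c n)) := by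
    rw [← key, ofReal_int]
    exact integral_congr_ae (Filter.Eventually.of_forall h2)
  have := congrArg Complex.re h3
  rw [Complex.ofReal_re] at this
  rw [this, Complex.re_sum]
  exact Finset.sum_congr rfl fun n _ => by rw [Complex.mul_conj, Complex.ofReal_re]

lemma int_q_S (fc : ℕ) {q : 𝕋 → ℝ} (hq : Integrable q volume) (c : ℤ → ℂ) :
    ∫ x : 𝕋, (q x : ℂ) * Sc fc c x
      = ∑ n ∈ Iset fc, c n * starRingEnd ℂ (coeffs q n) := by
  have h1 : ∀ x : 𝕋, (q x : ℂ) * Sc fc c x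
      = ∑ n ∈ Iset fc, c n * (fourier n x * (q x : ℂ)) := by
    intro x; rw [Sc, Finset.mul_sum]; exact Finset.sum_congr rfl fun n _ => by ring
  rw [integral_congr_ae (Filter.Eventually.of_forall h1),
    integral_finset_sum _ (fun n _ => (integrable_fourier_mul hq n).const_mul _)]
  refine Finset.sum_congr rfl fun n _ => ?_
  rw [integral_const_mul, ← coeffs_neg, coeffs, neg_neg]

end Kernel

lemma sInt_smul (m : SignedMeasure 𝕋) (f : 𝕋 → ℝ) (r : ℝ) :
    sInt m (fun t => r * f t) = r * sInt m f := by
  unfold sInt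
  rw [integral_const_mul, integral_const_mul]; ring

lemma sInt_sum {α : Type*} (m : SignedMeasure 𝕋) (s : Finset α) (g : α → 𝕋 → ℝ)
    (hg : ∀ i ∈ s, Continuous (g i)) :
    sInt m (fun t => ∑ i ∈ s, g i t) = ∑ i ∈ s, sInt m (g i) := by
  unfold sInt
  rw [integral_finset_sum _ (fun i hi => cont_integrableR (hg i hi) _),
    integral_finset_sum _ (fun i hi => cont_integrableR (hg i hi) _),
    Finset.sum_sub_distrib]

section Fubini
variable {φ : 𝕋 → ℝ}

lemma contA (μ : Measure 𝕋) [IsFiniteMeasure μ] (hφc : Continuous φ) {Cφ : ℝ}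
    (hb : ∀ u, |φ u| ≤ Cφ) : Continuous (fun t : 𝕋 => ∫ x, φ (x - t) ∂μ) := by
  refine continuous_of_dominated (bound := fun _ => Cφ)
    (fun t => (hφc.comp (continuous_id.sub continuous_const)).aestronglyMeasurable)
    (fun t => Filter.Eventually.of_forall fun x => ?_) (integrable_const Cφ)
    (Filter.Eventually.of_forall fun x => hφc.comp (continuous_const.sub continuous_id))
  simpa [Real.norm_eq_abs] using hb (x - t)

lemma swap_lemma (μ : Measure 𝕋) [IsFiniteMeasure μ] (hφc : Continuous φ) {Cφ : ℝ}
    (hb : ∀ u, |φ u| ≤ Cφ) {q : 𝕋 → ℝ} (hq : Integrable q volume) :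
    ∫ t, (∫ x, φ (x - t) ∂μ) * q t = ∫ x, (∫ t, φ (x - t) * q t) ∂μ := by
  have hInt : Integrable (Function.uncurry fun t x => φ (x - t) * q t) ((volume : Measure 𝕋).prod μ) := by
    refine Integrable.mono' (g := fun z => (Cφ * |q z.1|) * 1)
      (((hq.norm.const_mul Cφ)).mul_prod (integrable_const (1:ℝ)))
      (((hφc.comp (continuous_snd.sub continuous_fst)).aestronglyMeasurable).mul
        hq.aestronglyMeasurable.comp_fst)
      (Filter.Eventually.of_forall fun z => ?_)
    have h1 : ‖φ (z.2 - z.1) * q z.1‖ = |φ (z.2 - z.1)| * |q z.1| := abs_mul _ _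
    have h2 : |φ (z.2 - z.1)| * |q z.1| ≤ Cφ * |q z.1| :=
      mul_le_mul_of_nonneg_right (hb _) (abs_nonneg _)
    calc ‖Function.uncurry (fun t x => φ (x - t) * q t) z‖
        = |φ (z.2 - z.1)| * |q z.1| := h1
      _ ≤ Cφ * |q z.1| := h2
      _ = Cφ * |q z.1| * 1 := (mul_one _).symm
  have h1 : ∀ t : 𝕋, (∫ x, φ (x - t) ∂μ) * q t = ∫ x, φ (x - t) * q t ∂μ :=
    fun t => (integral_mul_const (q t) _).symm
  rw [integral_congr_ae (Filter.Eventually.of_forall h1)]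
  exact integral_integral_swap hInt

lemma dot_eq (hφc : Continuous φ) {Cφ : ℝ} (hb : ∀ u, |φ u| ≤ Cφ)
    (m₀ : SignedMeasure 𝕋) {q : 𝕋 → ℝ} (hq : Integrable q volume) :
    dotL2 (Phi φ m₀) q = sInt m₀ (PhiStar φ q) := by
  set P := m₀.toJordanDecomposition.posPart with hP
  set N := m₀.toJordanDecomposition.negPart with hN
  have hCnn : (0:ℝ) ≤ Cφ := le_trans (abs_nonneg _) (hb 0)
  have hintP : Integrable (fun t => (∫ x, φ (x - t) ∂P) * q t) volume := by
    refine Integrable.bdd_mul (c := Cφ * (P Set.univ).toReal) hq (contA P hφc hb).aestronglyMeasurable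
      (Filter.Eventually.of_forall fun t => ?_)
    exact norm_integral_le_of_norm_le_const
      (Filter.Eventually.of_forall fun x => by simpa [Real.norm_eq_abs] using hb (x - t))
  have hintN : Integrable (fun t => (∫ x, φ (x - t) ∂N) * q t) volume := by
    refine Integrable.bdd_mul (c := Cφ * (N Set.univ).toReal) hq (contA N hφc hb).aestronglyMeasurable
      (Filter.Eventually.of_forall fun t => ?_)
    exact norm_integral_le_of_norm_le_const
      (Filter.Eventually.of_forall fun x => by simpa [Real.norm_eq_abs] using hb (x - t))
  have step1 : dotL2 (Phi φ m₀) q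
      = ∫ t, ((∫ x, φ (x - t) ∂P) * q t - (∫ x, φ (x - t) ∂N) * q t) := by
    refine integral_congr_ae (Filter.Eventually.of_forall fun t => ?_)
    show Phi φ m₀ t * q t = _
    rw [Phi, sInt, sub_mul]
  rw [step1, integral_sub hintP hintN, swap_lemma P hφc hb hq,
    swap_lemma N hφc hb hq]
  rfl

end Fubini

lemma coeffs_zero_real (q : 𝕋 → ℝ) : coeffs q 0 = ((∫ x : 𝕋, q x : ℝ) : ℂ) := by
  rw [coeffs, ofReal_int]
  refine integral_congr_ae (Filter.Eventually.of_forall fun x => ?_)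
  simp only [neg_zero, fourier_zero, one_mul]

lemma Sc_coeffs_im (fc : ℕ) (q : 𝕋 → ℝ) (t : 𝕋) : (Sc fc (coeffs q) t).im = 0 := by
  rw [Sc, Iset, sum_Icc_neg fc (fun n => coeffs q n * fourier n t)]
  rw [Complex.add_im, Complex.im_sum]
  have h0 : (coeffs q 0 * fourier (0:ℤ) t).im = 0 := by
    rw [coeffs_zero_real, fourier_zero, mul_one, Complex.ofReal_im]
  have hp : ∀ k ∈ Finset.Icc 1 fc,
      (coeffs q k * fourier (k:ℤ) t + coeffs q (-(k:ℤ)) * fourier (-(k:ℤ)) t).im = 0 := by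
    intro k _
    have : coeffs q (-(k:ℤ)) * fourier (-(k:ℤ)) t
        = starRingEnd ℂ (coeffs q k * fourier (k:ℤ) t) := by
      rw [map_mul, ← coeffs_neg, ← fourier_neg]
    rw [this, Complex.add_im, Complex.conj_im]; ring
  rw [h0, Finset.sum_congr rfl hp]
  simp

lemma Sc_real {fc : ℕ} {c : ℤ → ℂ} {t : 𝕋} (h : (Sc fc c t).im = 0) :
    Sc fc c t = ((etaF fc c t : ℝ) : ℂ) := by
  apply Complex.ext
  · rw [Complex.ofReal_re]; rfl
  · rw [Complex.ofReal_im, h]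

lemma etaF_sq (fc : ℕ) {c : ℤ → ℂ} (h : ∀ t, (Sc fc c t).im = 0) :
    ∫ x : 𝕋, (etaF fc c x) ^ 2 = ∑ n ∈ Iset fc, Complex.normSq (c n) := by
  rw [← parseval_fin fc c]
  refine integral_congr_ae (Filter.Eventually.of_forall fun x => ?_)
  dsimp only
  rw [Complex.normSq_apply, h x, etaF]; ring

lemma bessel (fc : ℕ) {q : 𝕋 → ℝ} (hq2 : MemLp q 2 volume) :
    ∑ n ∈ Iset fc, Complex.normSq (coeffs q n) ≤ ∫ x : 𝕋, (q x) ^ 2 := by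
  have hq : Integrable q volume := hq2.integrable one_le_two
  set c := coeffs q with hc
  set η := etaF fc c with hη
  have hηc : Continuous η := etaF_cont fc c
  obtain ⟨C, hC⟩ : ∃ C, ∀ x : 𝕋, ‖η x‖ ≤ C := by
    obtain ⟨C, hC⟩ := isCompact_univ.exists_bound_of_continuousOn hηc.continuousOn
    exact ⟨C, fun x => hC x (Set.mem_univ x)⟩
  have hint_ηq : Integrable (fun x => η x * q x) volume :=
    Integrable.bdd_mul hq hηc.aestronglyMeasurable (Filter.Eventually.of_forall hC)
  have hcross : ∫ x : 𝕋, η x * q x = ∑ n ∈ Iset fc, Complex.normSq (c n) := by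
    have h1 : ((∫ x : 𝕋, η x * q x : ℝ) : ℂ) = ∫ x : 𝕋, (q x : ℂ) * Sc fc c x := by
      rw [ofReal_int]
      refine integral_congr_ae (Filter.Eventually.of_forall fun x => ?_)
      dsimp only
      rw [Complex.ofReal_mul, Sc_real (Sc_coeffs_im fc q x)]; ring
    rw [int_q_S fc hq c] at h1
    have h2 : ∑ n ∈ Iset fc, c n * starRingEnd ℂ (coeffs q n)
        = ((∑ n ∈ Iset fc, Complex.normSq (c n) : ℝ) : ℂ) := by
      rw [Complex.ofReal_sum]
      exact Finset.sum_congr rfl fun n _ => by rw [hc, Complex.mul_conj]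
    rw [h2] at h1
    exact_mod_cast h1
  have hη2 : ∫ x : 𝕋, (η x) ^ 2 = ∑ n ∈ Iset fc, Complex.normSq (c n) :=
    etaF_sq fc (Sc_coeffs_im fc q)
  have hint_q2 : Integrable (fun x : 𝕋 => q x ^ 2) volume := hq2.integrable_sq
  have hint_η2 : Integrable (fun x : 𝕋 => η x ^ 2) volume :=
    ((hηc.pow 2).integrable_of_hasCompactSupport (HasCompactSupport.of_compactSpace _))
  have key : (0:ℝ) ≤ ∫ x : 𝕋, (q x - η x) ^ 2 :=
    integral_nonneg fun x => sq_nonneg _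
  have expand : ∫ x : 𝕋, (q x - η x) ^ 2
      = (∫ x : 𝕋, q x ^ 2) - 2 * (∫ x : 𝕋, η x * q x) + ∫ x : 𝕋, η x ^ 2 := by
    have h1 : ∀ x : 𝕋, (q x - η x) ^ 2 = (q x ^ 2 - 2 * (η x * q x)) + η x ^ 2 := by
      intro x; ring
    have i3 : Integrable (fun x : 𝕋 => q x ^ 2 - 2 * (η x * q x)) volume := by
      exact hint_q2.sub (hint_ηq.const_mul 2)
    rw [integral_congr_ae (Filter.Eventually.of_forall h1),
      integral_add i3 hint_η2,
      integral_sub hint_q2 (hint_ηq.const_mul 2), integral_const_mul]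
  rw [expand, hcross, hη2] at key
  linarith


def extC (fc : ℕ) (c : {n : ℤ // n ∈ Iset fc} → ℂ) : ℤ → ℂ :=
  fun n => if h : n ∈ Iset fc then c ⟨n, h⟩ else 0

lemma sInt_add_cont (m : SignedMeasure 𝕋) (f g : 𝕋 → ℝ) (hf : Continuous f)
    (hg : Continuous g) : sInt m (fun t => f t + g t) = sInt m f + sInt m g := by
  unfold sInt
  rw [integral_add (cont_integrableR hf _) (cont_integrableR hg _),
    integral_add (cont_integrableR hf _) (cont_integrableR hg _)]
  ring

lemma Sc_congr' {fc : ℕ} {c c' : ℤ → ℂ} (h : ∀ n ∈ Iset fc, c n = c' n) :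
    Sc fc c = Sc fc c' := by
  funext t; exact Finset.sum_congr rfl fun n hn => by rw [h n hn]

lemma etaF_congr {fc : ℕ} {c c' : ℤ → ℂ} (h : ∀ n ∈ Iset fc, c n = c' n) :
    etaF fc c = etaF fc c' := by
  unfold etaF; rw [Sc_congr' h]

lemma Sc_extC (fc : ℕ) (c : {n : ℤ // n ∈ Iset fc} → ℂ) (t : 𝕋) :
    Sc fc (extC fc c) t = ∑ n ∈ (Iset fc).attach, c n * fourier (n : ℤ) t := by
  rw [Sc, ← Finset.sum_attach (Iset fc) (fun n => extC fc c n * fourier n t)]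
  exact Finset.sum_congr rfl fun n _ => by rw [extC, dif_pos n.2]


end AuxCert

/-- For the ideal low-pass filter with cutoff frequency `f_c`, the dual problem
`sup { ⟨y,p⟩ : ‖Φ*p‖_∞ ≤ 1 }` always admits a solution; hence the minimal-norm
certificate `p₀` is well defined for any input measure `m₀`. -/
theorem exists_minimal_norm_certificate_lowpass (fc : ℕ) (φ : 𝕋 → ℝ)
    (hφ : IsDirichlet fc φ) (m₀ : SignedMeasure 𝕋) (y : 𝕋 → ℝ) (hy : y = Phi φ m₀) :
    ∃ p₀ : 𝕋 → ℝ, DualAdm φ p₀ ∧ (∀ q, DualAdm φ q → dotL2 y q ≤ dotL2 y p₀) ∧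
      ∀ q, DualAdm φ q → dotL2 y q = dotL2 y p₀ → L2norm p₀ ≤ L2norm q := by

  classical
  subst hy
  have hφc : Continuous φ := phi_cont hφ
  have hb := phi_bound hφ
  -- the compact admissible coefficient set
  set V := ({n : ℤ // n ∈ Iset fc} → ℂ)
  set A : Set V := {c | ∀ t : 𝕋, ‖Sc fc (extC fc c) t‖ ≤ 1
      ∧ (Sc fc (extC fc c) t).im = 0} with hA
  have hSc_cont : ∀ t : 𝕋, Continuous fun c : V => Sc fc (extC fc c) t := by
    intro t
    have : (fun c : V => Sc fc (extC fc c) t)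
        = fun c : V => ∑ n ∈ (Iset fc).attach, c n * fourier (n : ℤ) t :=
      funext fun c => Sc_extC fc c t
    rw [this]
    exact continuous_finset_sum _ fun n _ => (continuous_apply n).mul continuous_const
  have hA_closed : IsClosed A := by
    have : A = ⋂ t : 𝕋, {c : V | ‖Sc fc (extC fc c) t‖ ≤ 1}
        ∩ {c : V | (Sc fc (extC fc c) t).im = 0} := by
      ext c; simp [hA, Set.mem_iInter, forall_and]
    rw [this]
    exact isClosed_iInter fun t =>
      ((isClosed_le (continuous_norm.comp (hSc_cont t)) continuous_const).inter
        (isClosed_eq (Complex.continuous_im.comp (hSc_cont t)) continuous_const))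
  have hA_bdd : A ⊆ Metric.closedBall 0 1 := by
    intro c hc
    rw [Metric.mem_closedBall, dist_zero_right]
    refine (pi_norm_le_iff_of_nonneg zero_le_one).2 fun n => ?_
    have h1 : extC fc c (n : ℤ) = c n := by rw [extC, dif_pos n.2]; 
    have h2 : (c n : ℂ) = ∫ x : 𝕋, fourier (-(n:ℤ)) x * Sc fc (extC fc c) x := by
      rw [coeffs_trig fc (extC fc c) n.2, h1]
    rw [h2]
    have := norm_integral_le_of_norm_le_const (μ := (volume : Measure 𝕋))
      (f := fun x : 𝕋 => fourier (-(n:ℤ)) x * Sc fc (extC fc c) x) (C := 1)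
      (Filter.Eventually.of_forall fun x => by
        rw [norm_mul]
        calc ‖(fourier (-(n:ℤ)) x : ℂ)‖ * ‖Sc fc (extC fc c) x‖
            ≤ 1 * 1 := by
              refine mul_le_mul ?_ (hc x).1 (norm_nonneg _) zero_le_one
              simp [Complex.norm_def]
          _ = 1 := by ring)
    simpa using this
  have hA_cpt : IsCompact A :=
    Metric.isCompact_of_isClosed_isBounded hA_closed
      (Metric.isBounded_closedBall.subset hA_bdd)
  have h0A : (0 : V) ∈ A := by
    intro t
    have : Sc fc (extC fc (0 : V)) t = 0 := by
      rw [Sc_extC]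
      exact Finset.sum_eq_zero fun n _ => by rw [Pi.zero_apply, zero_mul]
    rw [this]; simp
  -- the objective functionals
  set F : V → ℝ := fun c => sInt m₀ (etaF fc (extC fc c)) with hF
  have hF_formula : ∀ c : V, F c = ∑ n ∈ (Iset fc).attach,
      ((c n).re * sInt m₀ (fun t => (fourier (n:ℤ) t).re)
        + (-(c n).im) * sInt m₀ (fun t => (fourier (n:ℤ) t).im)) := by
    intro c
    have h1 : etaF fc (extC fc c) = fun t => ∑ n ∈ (Iset fc).attach,
        ((c n).re * (fourier (n:ℤ) t).re + (-(c n).im) * (fourier (n:ℤ) t).im) := by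
      funext t
      rw [etaF, Sc_extC, Complex.re_sum]
      exact Finset.sum_congr rfl fun n _ => by rw [Complex.mul_re]; ring
    have hFc : F c = sInt m₀ (etaF fc (extC fc c)) := rfl
    rw [hFc, h1, sInt_sum m₀ ((Iset fc).attach)
      (fun (n : {n : ℤ // n ∈ Iset fc}) (t : 𝕋) =>
        ((c n).re * (fourier (n:ℤ) t).re + (-(c n).im) * (fourier (n:ℤ) t).im))
      (fun i _ => Continuous.add
        (continuous_const.mul (Complex.continuous_re.comp (fourier (i:ℤ)).continuous))
        (continuous_const.mul (Complex.continuous_im.comp (fourier (i:ℤ)).continuous)))]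
    refine Finset.sum_congr rfl fun n _ => ?_
    rw [sInt_add_cont m₀ (fun t => (c n).re * (fourier (n:ℤ) t).re)
        (fun t => (-(c n).im) * (fourier (n:ℤ) t).im)
        (continuous_const.mul (Complex.continuous_re.comp (fourier (n:ℤ)).continuous))
        (continuous_const.mul (Complex.continuous_im.comp (fourier (n:ℤ)).continuous)),
      sInt_smul, sInt_smul]
  have hF_cont : Continuous F := by
    have : F = fun c : V => ∑ n ∈ (Iset fc).attach,
        ((c n).re * sInt m₀ (fun t => (fourier (n:ℤ) t).re)
          + (-(c n).im) * sInt m₀ (fun t => (fourier (n:ℤ) t).im)) :=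
      funext hF_formula
    rw [this]
    refine continuous_finset_sum _ fun n _ => Continuous.add ?_ ?_
    · exact (Complex.continuous_re.comp (continuous_apply n)).mul continuous_const
    · exact ((Complex.continuous_im.comp (continuous_apply n)).neg).mul continuous_const
  set Nf : V → ℝ := fun c => ∑ n ∈ (Iset fc).attach, Complex.normSq (c n) with hNf
  have hNf_cont : Continuous Nf :=
    continuous_finset_sum _ fun n _ => Complex.continuous_normSq.comp (continuous_apply n)
  -- maximize F on A, then minimize Nf
  obtain ⟨cmax, hcmaxA, hmax⟩ := hA_cpt.exists_isMaxOn ⟨0, h0A⟩ hF_cont.continuousOn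
  set B : Set V := A ∩ {c | F c = F cmax} with hB
  have hB_cpt : IsCompact B := hA_cpt.inter_right (isClosed_eq hF_cont continuous_const)
  obtain ⟨c₀, hc₀B, hmin⟩ := hB_cpt.exists_isMinOn ⟨cmax, hcmaxA, rfl⟩ hNf_cont.continuousOn
  obtain ⟨hc₀A, hc₀F⟩ := hc₀B
  -- the candidate
  set d : ℤ → ℂ := extC fc c₀ with hd
  set p₀ : 𝕋 → ℝ := etaF fc d with hp₀
  have hp₀c : Continuous p₀ := etaF_cont fc d
  have hp₀i : Integrable p₀ volume := cont_integrableR hp₀c volume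
  have hp₀_bound : ∀ t, |p₀ t| ≤ 1 := by
    intro t
    calc |p₀ t| = |(Sc fc d t).re| := rfl
      _ ≤ ‖Sc fc d t‖ := Complex.abs_re_le_norm _
      _ ≤ 1 := (hc₀A t).1
  -- coefficients of p₀ agree with c₀
  have hcoeff_p₀ : ∀ n ∈ Iset fc, coeffs p₀ n = d n := by
    intro n hn
    have h1 : ∀ x : 𝕋, fourier (-n) x * ((p₀ x : ℝ) : ℂ)
        = fourier (-n) x * Sc fc d x := by
      intro x
      rw [Sc_real (hc₀A x).2]
    calc coeffs p₀ n = ∫ x : 𝕋, fourier (-n) x * Sc fc d x :=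
          integral_congr_ae (Filter.Eventually.of_forall h1)
      _ = d n := coeffs_trig fc d hn
  have hPSp₀ : PhiStar φ p₀ = p₀ := by
    rw [phiStar_eq_etaF hφ hp₀i, hp₀]
    exact etaF_congr hcoeff_p₀
  have hAdm : DualAdm φ p₀ := by
    constructor
    · exact MemLp.of_bound hp₀c.aestronglyMeasurable 1
        (Filter.Eventually.of_forall fun t => by
          simpa [Real.norm_eq_abs] using hp₀_bound t)
    · intro t; rw [hPSp₀]; exact hp₀_bound t
  -- dotL2 y p₀ = F c₀
  have hdotp₀ : dotL2 (Phi φ m₀) p₀ = F c₀ := by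
    rw [dot_eq hφc hb m₀ hp₀i, hPSp₀]
  -- ∫ p₀^2 = Nf c₀
  have hsum_attach : ∑ n ∈ Iset fc, Complex.normSq (extC fc c₀ n)
        = ∑ n ∈ (Iset fc).attach, Complex.normSq (c₀ n) := by
    rw [← Finset.sum_attach (Iset fc) (fun n => Complex.normSq (extC fc c₀ n))]
    exact Finset.sum_congr rfl fun n _ => by rw [extC, dif_pos n.2]
  have hp₀sq : ∫ x : 𝕋, (p₀ x) ^ 2 = Nf c₀ := by
    rw [hp₀, etaF_sq fc (fun t => (hc₀A t).2)]
    exact hsum_attach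
  -- fields for admissible q
  have key_adm : ∀ q : 𝕋 → ℝ, DualAdm φ q →
      (dotL2 (Phi φ m₀) q = F (fun n : {n : ℤ // n ∈ Iset fc} => coeffs q ↑n))
      ∧ (fun n : {n : ℤ // n ∈ Iset fc} => coeffs q ↑n) ∈ A := by
    intro q hq
    have hqi : Integrable q volume := hq.1.integrable one_le_two
    set rq : V := fun n : {n : ℤ // n ∈ Iset fc} => coeffs q ↑n with hrq
    have hext : ∀ n ∈ Iset fc, extC fc rq n = coeffs q n := by
      intro n hn; rw [extC, dif_pos hn]
    have hScq : Sc fc (extC fc rq) = Sc fc (coeffs q) := Sc_congr' hext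
    have hPS : PhiStar φ q = etaF fc (coeffs q) := phiStar_eq_etaF hφ hqi
    constructor
    · rw [dot_eq hφc hb m₀ hqi, hPS, hF]
      congr 1
      exact (etaF_congr hext).symm
    · intro t
      rw [hScq]
      refine ⟨?_, Sc_coeffs_im fc q t⟩
      rw [Sc_real (Sc_coeffs_im fc q t)]
      calc ‖((etaF fc (coeffs q) t : ℝ) : ℂ)‖
          = |etaF fc (coeffs q) t| := by rw [Complex.norm_real, Real.norm_eq_abs]
        _ = |PhiStar φ q t| := by rw [hPS]
        _ ≤ 1 := hq.2 t
  refine ⟨p₀, hAdm, ?_, ?_⟩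
  · intro q hq
    obtain ⟨hdq, hqA⟩ := key_adm q hq
    rw [hdq, hdotp₀]
    calc F _ ≤ F cmax := hmax hqA
      _ = F c₀ := hc₀F.symm
  · intro q hq heq
    obtain ⟨hdq, hqA⟩ := key_adm q hq
    set rq : V := fun n : {n : ℤ // n ∈ Iset fc} => coeffs q ↑n with hrq
    have hrqB : rq ∈ B := by
      refine ⟨hqA, ?_⟩
      show F rq = F cmax
      rw [← hdq, heq, hdotp₀, hc₀F]
    have hNle : Nf c₀ ≤ Nf rq := hmin hrqB
    have hNrq : Nf rq = ∑ n ∈ Iset fc, Complex.normSq (coeffs q n) := by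
      rw [← Finset.sum_attach (Iset fc) (fun n => Complex.normSq (coeffs q n))]
    have hq2 : ∫ x : 𝕋, (p₀ x) ^ 2 ≤ ∫ x : 𝕋, (q x) ^ 2 := by
      rw [hp₀sq]
      calc Nf c₀ ≤ Nf rq := hNle
        _ = ∑ n ∈ Iset fc, Complex.normSq (coeffs q n) := hNrq
        _ ≤ ∫ x : 𝕋, (q x) ^ 2 := bessel fc hq.1
    exact Real.sqrt_le_sqrt hq2
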